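/- Fix an integer n ≥ 3. Let X be ℝ³ equipped with the norm ‖(x,y,z)‖ = max over j ∈ {0, 1, …, 2n−1} of max{ (|cos((2j+1)π/(2n))| |x| + |sin((2j+1)π/(2n))| |y|) / cos(π/(2n)), (|cos((2j+1)π/(2n))| |x| + |sin((2j+1)π/(2n))| |y|) / (2 cos(π/(2n))) + |z|/2 } (so that the unit ball of X is the polyhedron with vertices (cos(jπ/n), sin(jπ/n), ±1), j = 0, …, 2n−1, together with (0,0,±2)). Then X does not have Property P_3; indeed, (1,0,1)^⊥ ∪ (−1,0,1)^⊥ ∪ (0,0,2)^⊥ = X. -/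

import Mathlib

open scoped Real

/-- Birkhoff–James orthogonality: `x ⊥_B y` iff `‖x + λ y‖ ≥ ‖x‖` for all real `λ`. -/
def BJOrth {E : Type*} [NormedAddCommGroup E] [NormedSpace ℝ E] (x y : E) : Prop :=
  ∀ lam : ℝ, ‖x‖ ≤ ‖x + lam • y‖

/-- Property `P_n`: for every `n` unit vectors, the union of their Birkhoff–James
orthogonality sets is a proper subset of the whole space. -/
def PropertyP (X : Type*) [NormedAddCommGroup X] [NormedSpace ℝ X] (n : ℕ) : Prop :=
  ∀ x : Fin n → X, (∀ i, ‖x i‖ = 1) → (⋃ i, {y : X | BJOrth (x i) y}) ≠ Set.univ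

noncomputable def tt (n : ℕ) : ℝ :=
  Real.sin (π / (2 * (n : ℝ))) / Real.cos (π / (2 * (n : ℝ)))

lemma cos_pos_aux (n : ℕ) (hn : 3 ≤ n) : 0 < Real.cos (π / (2 * (n : ℝ))) := by
  have hπ := Real.pi_pos
  have hn' : (3 : ℝ) ≤ (n : ℝ) := by exact_mod_cast hn
  apply Real.cos_pos_of_mem_Ioo
  constructor
  · have : 0 < π / (2 * (n : ℝ)) := div_pos hπ (by linarith)
    nlinarith
  · rw [div_lt_div_iff₀ (by linarith) (by norm_num)]
    nlinarith

lemma sin_pos_aux (n : ℕ) (hn : 3 ≤ n) : 0 < Real.sin (π / (2 * (n : ℝ))) := by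
  have hπ := Real.pi_pos
  have hn' : (3 : ℝ) ≤ (n : ℝ) := by exact_mod_cast hn
  apply Real.sin_pos_of_pos_of_lt_pi
  · exact div_pos hπ (by linarith)
  · rw [div_lt_iff₀ (by linarith)]
    nlinarith

lemma tt_nonneg (n : ℕ) (hn : 3 ≤ n) : 0 ≤ tt n :=
  le_of_lt (div_pos (sin_pos_aux n hn) (cos_pos_aux n hn))

lemma abs_cos_le (n j : ℕ) (hn : 3 ≤ n) (hj : j < 2 * n) :
    |Real.cos ((2 * (j : ℝ) + 1) * π / (2 * (n : ℝ)))| ≤ Real.cos (π / (2 * (n : ℝ))) := by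
  have hπ := Real.pi_pos
  have hn' : (3 : ℝ) ≤ (n : ℝ) := by exact_mod_cast hn
  have hn0 : (0 : ℝ) < (n : ℝ) := by linarith
  have hc := cos_pos_aux n hn
  have hsinprod :
      0 ≤ Real.sin (((j : ℝ) + 1) * π / (n : ℝ)) * Real.sin ((j : ℝ) * π / (n : ℝ)) := by
    rcases le_or_gt (j + 1) n with h | h
    · have hj1 : ((j : ℝ) + 1) ≤ (n : ℝ) := by exact_mod_cast h
      have h1 : 0 ≤ Real.sin ((j : ℝ) * π / (n : ℝ)) := by
        apply Real.sin_nonneg_of_nonneg_of_le_pi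
        · positivity
        · rw [div_le_iff₀ hn0]; nlinarith
      have h2 : 0 ≤ Real.sin (((j : ℝ) + 1) * π / (n : ℝ)) := by
        apply Real.sin_nonneg_of_nonneg_of_le_pi
        · positivity
        · rw [div_le_iff₀ hn0]; nlinarith
      exact mul_nonneg h2 h1
    · have hjn : (n : ℝ) ≤ (j : ℝ) := by
        have : n ≤ j := by omega
        exact_mod_cast this
      have hj2n : (j : ℝ) + 1 ≤ 2 * (n : ℝ) := by
        have : j + 1 ≤ 2 * n := by omega
        exact_mod_cast this
      have h1 : Real.sin ((j : ℝ) * π / (n : ℝ)) ≤ 0 := by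
        have key : 0 ≤ Real.sin ((j : ℝ) * π / (n : ℝ) - π) := by
          apply Real.sin_nonneg_of_nonneg_of_le_pi
          · rw [sub_nonneg, le_div_iff₀ hn0]; nlinarith
          · rw [sub_le_iff_le_add, div_le_iff₀ hn0]; nlinarith
        rw [Real.sin_sub_pi] at key; linarith
      have h2 : Real.sin (((j : ℝ) + 1) * π / (n : ℝ)) ≤ 0 := by
        have key : 0 ≤ Real.sin (((j : ℝ) + 1) * π / (n : ℝ) - π) := by
          apply Real.sin_nonneg_of_nonneg_of_le_pi
          · rw [sub_nonneg, le_div_iff₀ hn0]; nlinarith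
          · rw [sub_le_iff_le_add, div_le_iff₀ hn0]; nlinarith
        rw [Real.sin_sub_pi] at key; linarith
      nlinarith
  have hsq : Real.cos ((2 * (j : ℝ) + 1) * π / (2 * (n : ℝ))) ^ 2
      ≤ Real.cos (π / (2 * (n : ℝ))) ^ 2 := by
    have c1 := Real.cos_sq (π / (2 * (n : ℝ)))
    have c2 := Real.cos_sq ((2 * (j : ℝ) + 1) * π / (2 * (n : ℝ)))
    have c3 := Real.cos_sub_cos (2 * (π / (2 * (n : ℝ))))
      (2 * ((2 * (j : ℝ) + 1) * π / (2 * (n : ℝ))))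
    have e1 : (2 * (π / (2 * (n : ℝ))) + 2 * ((2 * (j : ℝ) + 1) * π / (2 * (n : ℝ)))) / 2
        = ((j : ℝ) + 1) * π / (n : ℝ) := by field_simp; ring
    have e2 : (2 * (π / (2 * (n : ℝ))) - 2 * ((2 * (j : ℝ) + 1) * π / (2 * (n : ℝ)))) / 2
        = -((j : ℝ) * π / (n : ℝ)) := by field_simp; ring
    rw [e1, e2, Real.sin_neg] at c3
    nlinarith
  nlinarith [abs_nonneg (Real.cos ((2 * (j : ℝ) + 1) * π / (2 * (n : ℝ)))),
    sq_abs (Real.cos ((2 * (j : ℝ) + 1) * π / (2 * (n : ℝ))))]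

section Aux

variable {X : Type*} [NormedAddCommGroup X] [NormedSpace ℝ X]

lemma norm_lb (n : ℕ) (hn : 3 ≤ n) (e : X ≃ₗ[ℝ] ℝ × ℝ × ℝ)
    (hnorm : ∀ v : X, ‖v‖ =
      (Finset.range (2 * n)).sup' (Finset.nonempty_range_iff.mpr (Nat.mul_ne_zero two_ne_zero (by omega)))
        (fun j => max
          ((|Real.cos ((2 * (j : ℝ) + 1) * π / (2 * (n : ℝ)))| * |(e v).1| +
            |Real.sin ((2 * (j : ℝ) + 1) * π / (2 * (n : ℝ)))| * |(e v).2.1|) /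
              Real.cos (π / (2 * (n : ℝ))))
          ((|Real.cos ((2 * (j : ℝ) + 1) * π / (2 * (n : ℝ)))| * |(e v).1| +
            |Real.sin ((2 * (j : ℝ) + 1) * π / (2 * (n : ℝ)))| * |(e v).2.1|) /
              (2 * Real.cos (π / (2 * (n : ℝ)))) + |(e v).2.2| / 2))) (v : X) :
    (|(e v).1| + tt n * |(e v).2.1| ≤ ‖v‖) ∧
      ((|(e v).1| + tt n * |(e v).2.1|) / 2 + |(e v).2.2| / 2 ≤ ‖v‖) := by
  have hc := cos_pos_aux n hn
  have hs := sin_pos_aux n hn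
  have h0 : (0 : ℕ) ∈ Finset.range (2 * n) := Finset.mem_range.mpr (by omega)
  have hb := Finset.le_sup' (fun j : ℕ => max
          ((|Real.cos ((2 * (j : ℝ) + 1) * π / (2 * (n : ℝ)))| * |(e v).1| +
            |Real.sin ((2 * (j : ℝ) + 1) * π / (2 * (n : ℝ)))| * |(e v).2.1|) /
              Real.cos (π / (2 * (n : ℝ))))
          ((|Real.cos ((2 * (j : ℝ) + 1) * π / (2 * (n : ℝ)))| * |(e v).1| +
            |Real.sin ((2 * (j : ℝ) + 1) * π / (2 * (n : ℝ)))| * |(e v).2.1|) /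
              (2 * Real.cos (π / (2 * (n : ℝ)))) + |(e v).2.2| / 2)) h0
  have e0 : (2 * ((0 : ℕ) : ℝ) + 1) * π / (2 * (n : ℝ)) = π / (2 * (n : ℝ)) := by
    norm_num
  rw [e0, abs_of_pos hc, abs_of_pos hs] at hb
  rw [hnorm v]
  have key1 : |(e v).1| + tt n * |(e v).2.1|
      = (Real.cos (π / (2 * (n : ℝ))) * |(e v).1| +
          Real.sin (π / (2 * (n : ℝ))) * |(e v).2.1|) / Real.cos (π / (2 * (n : ℝ))) := by
    rw [tt]; field_simp
  have key2 : (|(e v).1| + tt n * |(e v).2.1|) / 2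
      = (Real.cos (π / (2 * (n : ℝ))) * |(e v).1| +
          Real.sin (π / (2 * (n : ℝ))) * |(e v).2.1|) /
            (2 * Real.cos (π / (2 * (n : ℝ)))) := by
    rw [tt]; field_simp
  constructor
  · rw [key1]
    exact le_trans (le_max_left _ _) hb
  · rw [key2]
    exact le_trans (le_max_right _ _) hb

lemma prism_bound (n : ℕ) (hn : 3 ≤ n) (e : X ≃ₗ[ℝ] ℝ × ℝ × ℝ)
    (hnorm : ∀ v : X, ‖v‖ =
      (Finset.range (2 * n)).sup' (Finset.nonempty_range_iff.mpr (Nat.mul_ne_zero two_ne_zero (by omega)))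
        (fun j => max
          ((|Real.cos ((2 * (j : ℝ) + 1) * π / (2 * (n : ℝ)))| * |(e v).1| +
            |Real.sin ((2 * (j : ℝ) + 1) * π / (2 * (n : ℝ)))| * |(e v).2.1|) /
              Real.cos (π / (2 * (n : ℝ))))
          ((|Real.cos ((2 * (j : ℝ) + 1) * π / (2 * (n : ℝ)))| * |(e v).1| +
            |Real.sin ((2 * (j : ℝ) + 1) * π / (2 * (n : ℝ)))| * |(e v).2.1|) /
              (2 * Real.cos (π / (2 * (n : ℝ)))) + |(e v).2.2| / 2)))
    (v : X) (σ ε : ℝ) (hσ : |σ| ≤ 1) (hε : |ε| ≤ 1) :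
    σ * (e v).1 + ε * (tt n * (e v).2.1) ≤ ‖v‖ := by
  have h := (norm_lb n hn e hnorm v).1
  have ht := tt_nonneg n hn
  have h1 : σ * (e v).1 ≤ |(e v).1| := by
    calc σ * (e v).1 ≤ |σ * (e v).1| := le_abs_self _
      _ = |σ| * |(e v).1| := abs_mul _ _
      _ ≤ 1 * |(e v).1| := mul_le_mul_of_nonneg_right hσ (abs_nonneg _)
      _ = |(e v).1| := one_mul _
  have h2 : ε * (tt n * (e v).2.1) ≤ tt n * |(e v).2.1| := by
    calc ε * (tt n * (e v).2.1) ≤ |ε * (tt n * (e v).2.1)| := le_abs_self _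
      _ = |ε| * (|tt n| * |(e v).2.1|) := by rw [abs_mul, abs_mul]
      _ ≤ 1 * (|tt n| * |(e v).2.1|) := by
          apply mul_le_mul_of_nonneg_right hε; positivity
      _ = tt n * |(e v).2.1| := by rw [one_mul, abs_of_nonneg ht]
  linarith

lemma pyr_bound (n : ℕ) (hn : 3 ≤ n) (e : X ≃ₗ[ℝ] ℝ × ℝ × ℝ)
    (hnorm : ∀ v : X, ‖v‖ =
      (Finset.range (2 * n)).sup' (Finset.nonempty_range_iff.mpr (Nat.mul_ne_zero two_ne_zero (by omega)))
        (fun j => max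
          ((|Real.cos ((2 * (j : ℝ) + 1) * π / (2 * (n : ℝ)))| * |(e v).1| +
            |Real.sin ((2 * (j : ℝ) + 1) * π / (2 * (n : ℝ)))| * |(e v).2.1|) /
              Real.cos (π / (2 * (n : ℝ))))
          ((|Real.cos ((2 * (j : ℝ) + 1) * π / (2 * (n : ℝ)))| * |(e v).1| +
            |Real.sin ((2 * (j : ℝ) + 1) * π / (2 * (n : ℝ)))| * |(e v).2.1|) /
              (2 * Real.cos (π / (2 * (n : ℝ)))) + |(e v).2.2| / 2)))
    (v : X) (σ ε : ℝ) (hσ : |σ| ≤ 1) (hε : |ε| ≤ 1) :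
    (σ * (e v).1 + ε * (tt n * (e v).2.1)) / 2 + (e v).2.2 / 2 ≤ ‖v‖ := by
  have h := (norm_lb n hn e hnorm v).2
  have ht := tt_nonneg n hn
  have h1 : σ * (e v).1 ≤ |(e v).1| := by
    calc σ * (e v).1 ≤ |σ * (e v).1| := le_abs_self _
      _ = |σ| * |(e v).1| := abs_mul _ _
      _ ≤ 1 * |(e v).1| := mul_le_mul_of_nonneg_right hσ (abs_nonneg _)
      _ = |(e v).1| := one_mul _
  have h2 : ε * (tt n * (e v).2.1) ≤ tt n * |(e v).2.1| := by
    calc ε * (tt n * (e v).2.1) ≤ |ε * (tt n * (e v).2.1)| := le_abs_self _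
      _ = |ε| * (|tt n| * |(e v).2.1|) := by rw [abs_mul, abs_mul]
      _ ≤ 1 * (|tt n| * |(e v).2.1|) := by
          apply mul_le_mul_of_nonneg_right hε; positivity
      _ = tt n * |(e v).2.1| := by rw [one_mul, abs_of_nonneg ht]
  have h3 : (e v).2.2 ≤ |(e v).2.2| := le_abs_self _
  linarith

lemma stepP (n : ℕ) (hn : 3 ≤ n) (e : X ≃ₗ[ℝ] ℝ × ℝ × ℝ)
    (hnorm : ∀ v : X, ‖v‖ =
      (Finset.range (2 * n)).sup' (Finset.nonempty_range_iff.mpr (Nat.mul_ne_zero two_ne_zero (by omega)))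
        (fun j => max
          ((|Real.cos ((2 * (j : ℝ) + 1) * π / (2 * (n : ℝ)))| * |(e v).1| +
            |Real.sin ((2 * (j : ℝ) + 1) * π / (2 * (n : ℝ)))| * |(e v).2.1|) /
              Real.cos (π / (2 * (n : ℝ))))
          ((|Real.cos ((2 * (j : ℝ) + 1) * π / (2 * (n : ℝ)))| * |(e v).1| +
            |Real.sin ((2 * (j : ℝ) + 1) * π / (2 * (n : ℝ)))| * |(e v).2.1|) /
              (2 * Real.cos (π / (2 * (n : ℝ)))) + |(e v).2.2| / 2)))
    (u w : X) (σ ε lam : ℝ) (hσ : |σ| ≤ 1) (hε : |ε| ≤ 1)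
    (hu : σ * (e u).1 + ε * (tt n * (e u).2.1) = 1)
    (hlam : 0 ≤ lam * (σ * (e w).1 + ε * (tt n * (e w).2.1))) :
    1 ≤ ‖u + lam • w‖ := by
  have hb := prism_bound n hn e hnorm (u + lam • w) σ ε hσ hε
  have he : e (u + lam • w) = e u + lam • e w := by simp
  rw [he] at hb
  simp only [Prod.fst_add, Prod.snd_add, Prod.smul_fst, Prod.smul_snd, smul_eq_mul] at hb
  nlinarith [hb, hu, hlam]

lemma stepQ (n : ℕ) (hn : 3 ≤ n) (e : X ≃ₗ[ℝ] ℝ × ℝ × ℝ)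
    (hnorm : ∀ v : X, ‖v‖ =
      (Finset.range (2 * n)).sup' (Finset.nonempty_range_iff.mpr (Nat.mul_ne_zero two_ne_zero (by omega)))
        (fun j => max
          ((|Real.cos ((2 * (j : ℝ) + 1) * π / (2 * (n : ℝ)))| * |(e v).1| +
            |Real.sin ((2 * (j : ℝ) + 1) * π / (2 * (n : ℝ)))| * |(e v).2.1|) /
              Real.cos (π / (2 * (n : ℝ))))
          ((|Real.cos ((2 * (j : ℝ) + 1) * π / (2 * (n : ℝ)))| * |(e v).1| +
            |Real.sin ((2 * (j : ℝ) + 1) * π / (2 * (n : ℝ)))| * |(e v).2.1|) /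
              (2 * Real.cos (π / (2 * (n : ℝ)))) + |(e v).2.2| / 2)))
    (u w : X) (σ ε lam : ℝ) (hσ : |σ| ≤ 1) (hε : |ε| ≤ 1)
    (hu : (σ * (e u).1 + ε * (tt n * (e u).2.1)) / 2 + (e u).2.2 / 2 = 1)
    (hlam : 0 ≤ lam * ((σ * (e w).1 + ε * (tt n * (e w).2.1)) / 2 + (e w).2.2 / 2)) :
    1 ≤ ‖u + lam • w‖ := by
  have hb := pyr_bound n hn e hnorm (u + lam • w) σ ε hσ hε
  have he : e (u + lam • w) = e u + lam • e w := by simp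
  rw [he] at hb
  simp only [Prod.fst_add, Prod.snd_add, Prod.smul_fst, Prod.smul_snd, smul_eq_mul] at hb
  nlinarith [hb, hu, hlam]

lemma norm_prism_vertex (n : ℕ) (hn : 3 ≤ n) (e : X ≃ₗ[ℝ] ℝ × ℝ × ℝ)
    (hnorm : ∀ v : X, ‖v‖ =
      (Finset.range (2 * n)).sup' (Finset.nonempty_range_iff.mpr (Nat.mul_ne_zero two_ne_zero (by omega)))
        (fun j => max
          ((|Real.cos ((2 * (j : ℝ) + 1) * π / (2 * (n : ℝ)))| * |(e v).1| +
            |Real.sin ((2 * (j : ℝ) + 1) * π / (2 * (n : ℝ)))| * |(e v).2.1|) /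
              Real.cos (π / (2 * (n : ℝ))))
          ((|Real.cos ((2 * (j : ℝ) + 1) * π / (2 * (n : ℝ)))| * |(e v).1| +
            |Real.sin ((2 * (j : ℝ) + 1) * π / (2 * (n : ℝ)))| * |(e v).2.1|) /
              (2 * Real.cos (π / (2 * (n : ℝ)))) + |(e v).2.2| / 2)))
    (v : X) (x z : ℝ) (hv : e v = (x, 0, z)) (hx : |x| = 1) (hz : |z| = 1) :
    ‖v‖ = 1 := by
  have hc := cos_pos_aux n hn
  have hub : ‖v‖ ≤ 1 := by
    rw [hnorm v]
    apply Finset.sup'_le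
    intro j hj
    have hcos := abs_cos_le n j hn (Finset.mem_range.mp hj)
    rw [hv]
    simp only [abs_zero, mul_zero, add_zero]
    rw [hx]
    simp only [mul_one, hz]
    apply max_le
    · rw [div_le_one hc]; exact hcos
    · have h1 : |Real.cos ((2 * (j : ℝ) + 1) * π / (2 * (n : ℝ)))| /
          (2 * Real.cos (π / (2 * (n : ℝ)))) ≤ 1 / 2 := by
        rw [div_le_div_iff₀ (by linarith) (by norm_num)]
        linarith
      linarith
  have hlb := (norm_lb n hn e hnorm v).1
  rw [hv] at hlb
  simp only [abs_zero, mul_zero, add_zero] at hlb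
  rw [hx] at hlb
  linarith

lemma norm_apex (n : ℕ) (hn : 3 ≤ n) (e : X ≃ₗ[ℝ] ℝ × ℝ × ℝ)
    (hnorm : ∀ v : X, ‖v‖ =
      (Finset.range (2 * n)).sup' (Finset.nonempty_range_iff.mpr (Nat.mul_ne_zero two_ne_zero (by omega)))
        (fun j => max
          ((|Real.cos ((2 * (j : ℝ) + 1) * π / (2 * (n : ℝ)))| * |(e v).1| +
            |Real.sin ((2 * (j : ℝ) + 1) * π / (2 * (n : ℝ)))| * |(e v).2.1|) /
              Real.cos (π / (2 * (n : ℝ))))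
          ((|Real.cos ((2 * (j : ℝ) + 1) * π / (2 * (n : ℝ)))| * |(e v).1| +
            |Real.sin ((2 * (j : ℝ) + 1) * π / (2 * (n : ℝ)))| * |(e v).2.1|) /
              (2 * Real.cos (π / (2 * (n : ℝ)))) + |(e v).2.2| / 2)))
    (v : X) (hv : e v = (0, 0, 2)) :
    ‖v‖ = 1 := by
  have hc := cos_pos_aux n hn
  have hub : ‖v‖ ≤ 1 := by
    rw [hnorm v]
    apply Finset.sup'_le
    intro j hj
    rw [hv]
    simp only [abs_zero, mul_zero, add_zero, zero_add, zero_div]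
    norm_num
  have hlb := (norm_lb n hn e hnorm v).2
  rw [hv] at hlb
  simp only [abs_zero, mul_zero, add_zero, zero_add, zero_div] at hlb
  norm_num at hlb
  linarith

end Aux

lemma exists_sign_pos (r : ℝ) : ∃ ε : ℝ, |ε| ≤ 1 ∧ ε * r = |r| := by
  rcases le_or_gt 0 r with h | h
  · exact ⟨1, by norm_num, by rw [one_mul, abs_of_nonneg h]⟩
  · exact ⟨-1, by norm_num, by rw [abs_of_neg h]; ring⟩

lemma exists_sign_neg (r : ℝ) : ∃ ε : ℝ, |ε| ≤ 1 ∧ ε * r = -|r| := by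
  obtain ⟨ε, h1, h2⟩ := exists_sign_pos r
  exact ⟨-ε, by rwa [abs_neg], by rw [← h2]; ring⟩

lemma mul_nonneg_np {p q : ℝ} (hp : p ≤ 0) (hq : q ≤ 0) : 0 ≤ p * q := by nlinarith

/-- Let `n ≥ 3` and let `X` be `ℝ³` (identified via a linear equivalence `e`
with `ℝ × ℝ × ℝ`) with the norm
`‖(x,y,z)‖ = max_{0 ≤ j ≤ 2n−1} max{A_j, A_j/2 + |z|/2}` where
`A_j = (|cos((2j+1)π/2n)||x| + |sin((2j+1)π/2n)||y|)/cos(π/2n)` (unit ball: the prism with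
pyramids glued on top and bottom, having the extra vertices `(0,0,±2)`).
Then `X` fails Property `P_3`; indeed `(1,0,1)^⊥ ∪ (−1,0,1)^⊥ ∪ (0,0,2)^⊥ = X`. -/
theorem stmt17 {X : Type*} [NormedAddCommGroup X] [NormedSpace ℝ X]
    (n : ℕ) (hn : 3 ≤ n) (e : X ≃ₗ[ℝ] ℝ × ℝ × ℝ)
    (hnorm : ∀ v : X, ‖v‖ =
      (Finset.range (2 * n)).sup' (Finset.nonempty_range_iff.mpr (by omega))
        (fun j => max
          ((|Real.cos ((2 * (j : ℝ) + 1) * π / (2 * (n : ℝ)))| * |(e v).1| +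
            |Real.sin ((2 * (j : ℝ) + 1) * π / (2 * (n : ℝ)))| * |(e v).2.1|) /
              Real.cos (π / (2 * (n : ℝ))))
          ((|Real.cos ((2 * (j : ℝ) + 1) * π / (2 * (n : ℝ)))| * |(e v).1| +
            |Real.sin ((2 * (j : ℝ) + 1) * π / (2 * (n : ℝ)))| * |(e v).2.1|) /
              (2 * Real.cos (π / (2 * (n : ℝ)))) + |(e v).2.2| / 2))) :
    ¬ PropertyP X 3 ∧
    ({w : X | BJOrth (e.symm (1, 0, 1)) w} ∪ {w : X | BJOrth (e.symm (-1, 0, 1)) w} ∪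
      {w : X | BJOrth (e.symm (0, 0, 2)) w}) = Set.univ := by
  have hc := cos_pos_aux n hn
  have ht := tt_nonneg n hn
  have heu1 : e (e.symm ((1 : ℝ), (0 : ℝ), (1 : ℝ))) = (1, 0, 1) := e.apply_symm_apply _
  have heu2 : e (e.symm ((-1 : ℝ), (0 : ℝ), (1 : ℝ))) = (-1, 0, 1) := e.apply_symm_apply _
  have heu3 : e (e.symm ((0 : ℝ), (0 : ℝ), (2 : ℝ))) = (0, 0, 2) := e.apply_symm_apply _
  have hnu1 : ‖e.symm ((1 : ℝ), (0 : ℝ), (1 : ℝ))‖ = 1 :=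
    norm_prism_vertex n hn e hnorm _ 1 1 heu1 (by norm_num) (by norm_num)
  have hnu2 : ‖e.symm ((-1 : ℝ), (0 : ℝ), (1 : ℝ))‖ = 1 :=
    norm_prism_vertex n hn e hnorm _ (-1) 1 heu2 (by norm_num) (by norm_num)
  have hnu3 : ‖e.symm ((0 : ℝ), (0 : ℝ), (2 : ℝ))‖ = 1 :=
    norm_apex n hn e hnorm _ heu3
  have hcover : ∀ w : X, BJOrth (e.symm ((1 : ℝ), (0 : ℝ), (1 : ℝ))) w ∨
      BJOrth (e.symm ((-1 : ℝ), (0 : ℝ), (1 : ℝ))) w ∨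
      BJOrth (e.symm ((0 : ℝ), (0 : ℝ), (2 : ℝ))) w := by
    intro w
    have hta : 0 ≤ tt n * |(e w).2.1| := mul_nonneg ht (abs_nonneg _)
    rcases le_or_gt |(e w).2.2| (|(e w).1| + tt n * |(e w).2.1|) with hA | hB
    · -- case: in the apex orthogonality set
      right; right
      intro lam
      rw [hnu3]
      rcases le_or_gt 0 lam with hl | hl
      · obtain ⟨σ, hσ, hσa⟩ := exists_sign_pos (e w).1
        obtain ⟨ε, hε, hεb⟩ := exists_sign_pos (e w).2.1
        apply stepQ n hn e hnorm _ w σ ε lam hσ hε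
        · rw [heu3]; norm_num
        · apply mul_nonneg hl
          have h2 : ε * (tt n * (e w).2.1) = tt n * |(e w).2.1| := by
            rw [show ε * (tt n * (e w).2.1) = tt n * (ε * (e w).2.1) from by ring, hεb]
          have h3 := neg_abs_le (e w).2.2
          linarith [hσa, h2]
      · obtain ⟨σ, hσ, hσa⟩ := exists_sign_neg (e w).1
        obtain ⟨ε, hε, hεb⟩ := exists_sign_neg (e w).2.1
        apply stepQ n hn e hnorm _ w σ ε lam hσ hε
        · rw [heu3]; norm_num
        · apply mul_nonneg_np hl.le
          have h2 : ε * (tt n * (e w).2.1) = -(tt n * |(e w).2.1|) := by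
            rw [show ε * (tt n * (e w).2.1) = tt n * (ε * (e w).2.1) from by ring, hεb]
            ring
          have h3 := le_abs_self (e w).2.2
          linarith [hσa, h2]
    · rcases le_or_gt (e w).2.2 0 with hd | hd
      · -- d < 0 (since |d| > 0)
        have hd' : |(e w).2.2| = -(e w).2.2 := abs_of_nonpos hd
        rcases le_or_gt 0 ((e w).1 + tt n * |(e w).2.1|) with ha | ha
        · -- u1 works
          left
          intro lam
          rw [hnu1]
          rcases le_or_gt 0 lam with hl | hl
          · obtain ⟨ε, hε, hεb⟩ := exists_sign_pos (e w).2.1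
            apply stepP n hn e hnorm _ w 1 ε lam (by norm_num) hε
            · rw [heu1]; norm_num
            · apply mul_nonneg hl
              have h2 : ε * (tt n * (e w).2.1) = tt n * |(e w).2.1| := by
                rw [show ε * (tt n * (e w).2.1) = tt n * (ε * (e w).2.1) from by ring, hεb]
              linarith [h2]
          · obtain ⟨ε, hε, hεb⟩ := exists_sign_neg (e w).2.1
            apply stepQ n hn e hnorm _ w 1 ε lam (by norm_num) hε
            · rw [heu1]; norm_num
            · apply mul_nonneg_np hl.le
              have h2 : ε * (tt n * (e w).2.1) = -(tt n * |(e w).2.1|) := by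
                rw [show ε * (tt n * (e w).2.1) = tt n * (ε * (e w).2.1) from by ring, hεb]
                ring
              have h3 := le_abs_self (e w).1
              linarith [h2]
        · -- u2 works
          right; left
          intro lam
          rw [hnu2]
          rcases le_or_gt 0 lam with hl | hl
          · obtain ⟨ε, hε, hεb⟩ := exists_sign_pos (e w).2.1
            apply stepP n hn e hnorm _ w (-1) ε lam (by norm_num) hε
            · rw [heu2]; norm_num
            · apply mul_nonneg hl
              have h2 : ε * (tt n * (e w).2.1) = tt n * |(e w).2.1| := by
                rw [show ε * (tt n * (e w).2.1) = tt n * (ε * (e w).2.1) from by ring, hεb]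
              linarith [h2]
          · obtain ⟨ε, hε, hεb⟩ := exists_sign_neg (e w).2.1
            apply stepQ n hn e hnorm _ w (-1) ε lam (by norm_num) hε
            · rw [heu2]; norm_num
            · apply mul_nonneg_np hl.le
              have h2 : ε * (tt n * (e w).2.1) = -(tt n * |(e w).2.1|) := by
                rw [show ε * (tt n * (e w).2.1) = tt n * (ε * (e w).2.1) from by ring, hεb]
                ring
              have ha' : |(e w).1| = -(e w).1 := abs_of_neg (by linarith)
              linarith [h2]
      · -- d > 0
        have hd' : |(e w).2.2| = (e w).2.2 := abs_of_pos hd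
        rcases le_or_gt (e w).1 (tt n * |(e w).2.1|) with ha | ha
        · -- u1 works
          left
          intro lam
          rw [hnu1]
          rcases le_or_gt 0 lam with hl | hl
          · obtain ⟨ε, hε, hεb⟩ := exists_sign_pos (e w).2.1
            apply stepQ n hn e hnorm _ w 1 ε lam (by norm_num) hε
            · rw [heu1]; norm_num
            · apply mul_nonneg hl
              have h2 : ε * (tt n * (e w).2.1) = tt n * |(e w).2.1| := by
                rw [show ε * (tt n * (e w).2.1) = tt n * (ε * (e w).2.1) from by ring, hεb]
              have h3 := neg_abs_le (e w).1
              linarith [h2]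
          · obtain ⟨ε, hε, hεb⟩ := exists_sign_neg (e w).2.1
            apply stepP n hn e hnorm _ w 1 ε lam (by norm_num) hε
            · rw [heu1]; norm_num
            · apply mul_nonneg_np hl.le
              have h2 : ε * (tt n * (e w).2.1) = -(tt n * |(e w).2.1|) := by
                rw [show ε * (tt n * (e w).2.1) = tt n * (ε * (e w).2.1) from by ring, hεb]
                ring
              linarith [h2]
        · -- u2 works
          right; left
          intro lam
          rw [hnu2]
          rcases le_or_gt 0 lam with hl | hl
          · obtain ⟨ε, hε, hεb⟩ := exists_sign_pos (e w).2.1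
            apply stepQ n hn e hnorm _ w (-1) ε lam (by norm_num) hε
            · rw [heu2]; norm_num
            · apply mul_nonneg hl
              have h2 : ε * (tt n * (e w).2.1) = tt n * |(e w).2.1| := by
                rw [show ε * (tt n * (e w).2.1) = tt n * (ε * (e w).2.1) from by ring, hεb]
              have h3 := le_abs_self (e w).1
              linarith [h2]
          · obtain ⟨ε, hε, hεb⟩ := exists_sign_neg (e w).2.1
            apply stepP n hn e hnorm _ w (-1) ε lam (by norm_num) hε
            · rw [heu2]; norm_num
            · apply mul_nonneg_np hl.le
              have h2 : ε * (tt n * (e w).2.1) = -(tt n * |(e w).2.1|) := by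
                rw [show ε * (tt n * (e w).2.1) = tt n * (ε * (e w).2.1) from by ring, hεb]
                ring
              linarith [h2]
  constructor
  · intro hP
    apply hP ![e.symm ((1 : ℝ), (0 : ℝ), (1 : ℝ)), e.symm ((-1 : ℝ), (0 : ℝ), (1 : ℝ)),
        e.symm ((0 : ℝ), (0 : ℝ), (2 : ℝ))]
    · intro i
      fin_cases i <;> simpa using (by first | exact hnu1 | exact hnu2 | exact hnu3)
    · apply Set.eq_univ_iff_forall.mpr
      intro w
      rcases hcover w with h | h | h
      · exact Set.mem_iUnion.mpr ⟨0, by simpa using h⟩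
      · exact Set.mem_iUnion.mpr ⟨1, by simpa using h⟩
      · exact Set.mem_iUnion.mpr ⟨2, by simpa using h⟩
  · apply Set.eq_univ_iff_forall.mpr
    intro w
    rcases hcover w with h | h | h
    · exact Set.mem_union_left _ (Set.mem_union_left _ h)
    · exact Set.mem_union_left _ (Set.mem_union_right _ h)
    · exact Set.mem_union_right _ h
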